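/- In the continuous modal μ-calculus, if x <_ξ y in the dependency order of a clean formula ξ, then x is a μ-variable if and only if y is a μ-variable (i.e. the continuous modal μ-calculus is alternation-free). -/
import Mathlib


/-- Formulas of the modal μ-calculus in negation normal form. -/
inductive Formula : Type
  | atom : ℕ → Formula
  | natom : ℕ → Formula
  | or : Formula → Formula → Formula
  | and : Formula → Formula → Formula
  | dia : Formula → Formula
  | box : Formula → Formula
  | mu : ℕ → Formula → Formula
  | nu : ℕ → Formula → Formula
  deriving DecidableEq

namespace Formula

/-- free variables -/
def fv : Formula → Finset ℕ
  | atom p => {p}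
  | natom p => {p}
  | or φ ψ => fv φ ∪ fv ψ
  | and φ ψ => fv φ ∪ fv ψ
  | dia φ => fv φ
  | box φ => fv φ
  | mu x φ => fv φ \ {x}
  | nu x φ => fv φ \ {x}

/-- bound variables -/
def bv : Formula → Finset ℕ
  | atom _ => ∅
  | natom _ => ∅
  | or φ ψ => bv φ ∪ bv ψ
  | and φ ψ => bv φ ∪ bv ψ
  | dia φ => bv φ
  | box φ => bv φ
  | mu x φ => insert x (bv φ)
  | nu x φ => insert x (bv φ)

/-- the multiset of variables bound by binders (with multiplicity) -/
def binders : Formula → Multiset ℕ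
  | atom _ => 0
  | natom _ => 0
  | or φ ψ => binders φ + binders ψ
  | and φ ψ => binders φ + binders ψ
  | dia φ => binders φ
  | box φ => binders φ
  | mu x φ => x ::ₘ binders φ
  | nu x φ => x ::ₘ binders φ

/-- negation, keeping the variables in `X` fixed (used under fixpoint binders, where
`∼ηx.φ := η̄x.∼φ[¬x/x]`, so that the double negation on `x` cancels). -/
def negF : Finset ℕ → Formula → Formula
  | X, atom p => if p ∈ X then atom p else natom p
  | X, natom p => if p ∈ X then natom p else atom p
  | X, or φ ψ => and (negF X φ) (negF X ψ)
  | X, and φ ψ => or (negF X φ) (negF X ψ)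
  | X, dia φ => box (negF X φ)
  | X, box φ => dia (negF X φ)
  | X, mu x φ => nu x (negF (insert x X) φ)
  | X, nu x φ => mu x (negF (insert x X) φ)

/-- the negation operator `∼` on negation normal forms -/
def neg : Formula → Formula := negF ∅

/-- substitution of `ψ` for the variable `x` (formulas are assumed tidy, so that
no capture occurs; at negative occurrences the negation of `ψ` is substituted). -/
def subst : Formula → ℕ → Formula → Formula
  | atom p, x, ψ => if p = x then ψ else atom p
  | natom p, x, ψ => if p = x then neg ψ else natom p
  | or φ₁ φ₂, x, ψ => or (subst φ₁ x ψ) (subst φ₂ x ψ)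
  | and φ₁ φ₂, x, ψ => and (subst φ₁ x ψ) (subst φ₂ x ψ)
  | dia φ, x, ψ => dia (subst φ x ψ)
  | box φ, x, ψ => box (subst φ x ψ)
  | mu y φ, x, ψ => if y = x then mu y φ else mu y (subst φ x ψ)
  | nu y φ, x, ψ => if y = x then nu y φ else nu y (subst φ x ψ)

def bot : Formula := and (atom 0) (natom 0)
def top : Formula := or (atom 0) (natom 0)
def impl (φ ψ : Formula) : Formula := or (neg φ) ψ
def iffF (φ ψ : Formula) : Formula := and (impl φ ψ) (impl ψ φ)

end Formula

open Formula

/-- the Fischer-Ladner closure (as an inductively defined predicate) -/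
inductive FL (Φ : Set Formula) : Formula → Prop
  | base : ∀ {φ}, φ ∈ Φ → FL Φ φ
  | natom : ∀ {p}, FL Φ (.natom p) → FL Φ (.atom p)
  | orL : ∀ {φ ψ}, FL Φ (.or φ ψ) → FL Φ φ
  | orR : ∀ {φ ψ}, FL Φ (.or φ ψ) → FL Φ ψ
  | andL : ∀ {φ ψ}, FL Φ (.and φ ψ) → FL Φ φ
  | andR : ∀ {φ ψ}, FL Φ (.and φ ψ) → FL Φ ψ
  | dia : ∀ {φ}, FL Φ (.dia φ) → FL Φ φ
  | box : ∀ {φ}, FL Φ (.box φ) → FL Φ φ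
  | mu : ∀ {x φ}, FL Φ (.mu x φ) → FL Φ (subst φ x (.mu x φ))
  | nu : ∀ {x φ}, FL Φ (.nu x φ) → FL Φ (subst φ x (.nu x φ))

/-- `Cl Φ` : the FL-closure of `Φ` -/
def Cl (Φ : Set Formula) : Set Formula := {φ | FL Φ φ}

def FLClosed (Sg : Set Formula) : Prop := ∀ φ, FL Sg φ → φ ∈ Sg

/-- the subformula relation `⊴` -/
inductive Subf : Formula → Formula → Prop
  | refl : ∀ φ, Subf φ φ
  | orL : ∀ {φ ψ₁ ψ₂}, Subf φ ψ₁ → Subf φ (.or ψ₁ ψ₂)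
  | orR : ∀ {φ ψ₁ ψ₂}, Subf φ ψ₂ → Subf φ (.or ψ₁ ψ₂)
  | andL : ∀ {φ ψ₁ ψ₂}, Subf φ ψ₁ → Subf φ (.and ψ₁ ψ₂)
  | andR : ∀ {φ ψ₁ ψ₂}, Subf φ ψ₂ → Subf φ (.and ψ₁ ψ₂)
  | dia : ∀ {φ ψ}, Subf φ ψ → Subf φ (.dia ψ)
  | box : ∀ {φ ψ}, Subf φ ψ → Subf φ (.box ψ)
  | mu : ∀ {φ x ψ}, Subf φ ψ → Subf φ (.mu x ψ)
  | nu : ∀ {φ x ψ}, Subf φ ψ → Subf φ (.nu x ψ)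

/-- strict subformula `⊲` -/
def SSubf (φ ψ : Formula) : Prop := Subf φ ψ ∧ φ ≠ ψ

/-- a formula is tidy if its free and bound variables are disjoint -/
def Tidy (φ : Formula) : Prop := Disjoint (fv φ) (bv φ)

/-- a formula is clean if it is tidy and every bound variable has a unique binder -/
def Clean (φ : Formula) : Prop := Tidy φ ∧ (binders φ).Nodup

/-- `x` has binder `μ` in `ξ` -/
def MuVar (ξ : Formula) (x : ℕ) : Prop := ∃ δ, Subf (.mu x δ) ξ
/-- `x` has binder `ν` in `ξ` -/
def NuVar (ξ : Formula) (x : ℕ) : Prop := ∃ δ, Subf (.nu x δ) ξ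

/-- base of the dependency order: `x <_ξ y` whenever `δ_x ⊲ δ_y` and `y ⊲ δ_x` -/
def depBase (ξ : Formula) (x y : ℕ) : Prop :=
  ∃ δx δy : Formula,
    (Subf (.mu x δx) ξ ∨ Subf (.nu x δx) ξ) ∧
    (Subf (.mu y δy) ξ ∨ Subf (.nu y δy) ξ) ∧
    SSubf δx δy ∧ SSubf (.atom y) δx

/-- the dependency order `<_ξ` : the least strict partial order containing `depBase` -/
def dep (ξ : Formula) : ℕ → ℕ → Prop := Relation.TransGen (depBase ξ)

mutual
  /-- membership in the continuous modal μ-calculus `μ_cML` -/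
  inductive MuC : Formula → Prop
    | atom : ∀ p, MuC (.atom p)
    | natom : ∀ p, MuC (.natom p)
    | or : ∀ {φ ψ}, MuC φ → MuC ψ → MuC (.or φ ψ)
    | and : ∀ {φ ψ}, MuC φ → MuC ψ → MuC (.and φ ψ)
    | dia : ∀ {φ}, MuC φ → MuC (.dia φ)
    | box : ∀ {φ}, MuC φ → MuC (.box φ)
    | mu : ∀ {x φ}, ContIn ({x} : Set ℕ) φ → MuC (.mu x φ)
    | nu : ∀ {x φ}, CoconIn ({x} : Set ℕ) φ → MuC (.nu x φ)
  /-- the fragment of `μ_cML`-formulas continuous in `X` -/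
  inductive ContIn : Set ℕ → Formula → Prop
    | var : ∀ {X x}, x ∈ X → ContIn X (.atom x)
    | free : ∀ {X α}, MuC α → (∀ x ∈ X, x ∉ fv α) → ContIn X α
    | or : ∀ {X φ ψ}, ContIn X φ → ContIn X ψ → ContIn X (.or φ ψ)
    | and : ∀ {X φ ψ}, ContIn X φ → ContIn X ψ → ContIn X (.and φ ψ)
    | dia : ∀ {X φ}, ContIn X φ → ContIn X (.dia φ)
    | mu : ∀ {X y φ}, ContIn (insert y X) φ → ContIn X (.mu y φ)
  /-- the fragment of `μ_cML`-formulas cocontinuous in `X` -/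
  inductive CoconIn : Set ℕ → Formula → Prop
    | var : ∀ {X x}, x ∈ X → CoconIn X (.atom x)
    | free : ∀ {X α}, MuC α → (∀ x ∈ X, x ∉ fv α) → CoconIn X α
    | or : ∀ {X φ ψ}, CoconIn X φ → CoconIn X ψ → CoconIn X (.or φ ψ)
    | and : ∀ {X φ ψ}, CoconIn X φ → CoconIn X ψ → CoconIn X (.and φ ψ)
    | box : ∀ {X φ}, CoconIn X φ → CoconIn X (.box φ)
    | nu : ∀ {X y φ}, CoconIn (insert y X) φ → CoconIn X (.nu y φ)
end

/-- a basic modal formula: no fixpoint operators -/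
def IsBasic : Formula → Prop
  | .or φ ψ => IsBasic φ ∧ IsBasic ψ
  | .and φ ψ => IsBasic φ ∧ IsBasic ψ
  | .dia φ => IsBasic φ
  | .box φ => IsBasic φ
  | .mu _ _ => False
  | .nu _ _ => False
  | _ => True

/- ########  Semantics  ######## -/

/-- algebraic semantics: the meaning of a formula, relative to a valuation -/
def sem {S : Type} (R : S → S → Prop) : Formula → (ℕ → Set S) → Set S
  | .atom p, V => V p
  | .natom p, V => (V p)ᶜ
  | .or φ ψ, V => sem R φ V ∪ sem R ψ V
  | .and φ ψ, V => sem R φ V ∩ sem R ψ V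
  | .dia φ, V => {s | ∃ t, R s t ∧ t ∈ sem R φ V}
  | .box φ, V => {s | ∀ t, R s t → t ∈ sem R φ V}
  | .mu x φ, V => ⋂₀ {X : Set S | sem R φ (Function.update V x X) ⊆ X}
  | .nu x φ, V => ⋃₀ {X : Set S | X ⊆ sem R φ (Function.update V x X)}

/-- Kripke models -/
structure KModel where
  S : Type
  R : S → S → Prop
  V : ℕ → Set S

/-- Kripke frames -/
structure KFrame where
  S : Type
  R : S → S → Prop

def sat (M : KModel) (s : M.S) (φ : Formula) : Prop := s ∈ sem M.R φ M.V

def validM (M : KModel) (φ : Formula) : Prop := ∀ s, sat M s φ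

def validF (F : KFrame) (φ : Formula) : Prop := ∀ (V : ℕ → Set F.S) (s : F.S), s ∈ sem F.R φ V

def frameOf (M : KModel) : KFrame := ⟨M.S, M.R⟩

/- ########  Filtration  ######## -/

/-- Σ-equivalence: satisfying the same formulas of `Sg` -/
def fEquiv (M : KModel) (Sg : Finset Formula) : Setoid M.S :=
  ⟨fun s t => ∀ φ ∈ Sg, (sat M s φ ↔ sat M t φ),
   ⟨fun _ _ _ => Iff.rfl, fun h φ hφ => (h φ hφ).symm,
    fun h1 h2 φ hφ => (h1 φ hφ).trans (h2 φ hφ)⟩⟩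

def FStates (M : KModel) (Sg : Finset Formula) : Type := Quotient (fEquiv M Sg)

def fcls (M : KModel) (Sg : Finset Formula) (s : M.S) : FStates M Sg :=
  Quotient.mk (fEquiv M Sg) s

/-- a filtration of `M` through `Sg`: a relation between `R^min` and `R^max`,
with the induced valuation on atoms of `Sg` -/
structure Filtration (M : KModel) (Sg : Finset Formula) where
  R' : FStates M Sg → FStates M Sg → Prop
  V' : ℕ → Set (FStates M Sg)
  rmin : ∀ s t : M.S, M.R s t → R' (fcls M Sg s) (fcls M Sg t)
  rmax : ∀ s t : M.S, R' (fcls M Sg s) (fcls M Sg t) →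
      ∀ φ, Formula.box φ ∈ Sg → sat M s (.box φ) → sat M t φ
  hv : ∀ p, Formula.atom p ∈ Sg → ∀ s : M.S, (fcls M Sg s ∈ V' p ↔ s ∈ M.V p)

def filtModel (M : KModel) (Sg : Finset Formula) (F : Filtration M Sg) : KModel :=
  ⟨FStates M Sg, F.R', F.V'⟩

/-- a class of models admits filtration with respect to a language `D` -/
def AdmFilt (Mcl : KModel → Prop) (D : Formula → Prop) : Prop :=
  ∀ M, Mcl M → ∀ Sg : Finset Formula, FLClosed ↑Sg → (∀ φ ∈ Sg, D φ) →
    ∃ F : Filtration M Sg, Mcl (filtModel M Sg F)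

/- ########  Proof systems  ######## -/

/-- propositional evaluation (modal/fixpoint formulas treated as atoms) -/
def beval (v : Formula → Bool) : Formula → Bool
  | .atom p => v (.atom p)
  | .natom p => !v (.atom p)
  | .or φ ψ => beval v φ || beval v ψ
  | .and φ ψ => beval v φ && beval v ψ
  | φ => v φ

/-- the basic normal modal logic axiomatised by `Ax` -/
inductive BPrf (Ax : Set Formula) : Formula → Prop
  | ax : ∀ {φ}, φ ∈ Ax → BPrf Ax φ
  | taut : ∀ {φ}, (∀ v, beval v φ = true) → BPrf Ax φ
  | norm : BPrf Ax (neg (.dia bot))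
  | addL : ∀ {φ ψ}, BPrf Ax (impl (.dia (.or φ ψ)) (.or (.dia φ) (.dia ψ)))
  | addR : ∀ {φ ψ}, BPrf Ax (impl (.or (.dia φ) (.dia ψ)) (.dia (.or φ ψ)))
  | dual1 : ∀ {φ}, BPrf Ax (impl (.dia φ) (neg (.box (neg φ))))
  | dual2 : ∀ {φ}, BPrf Ax (impl (neg (.box (neg φ))) (.dia φ))
  | mp : ∀ {φ ψ}, BPrf Ax (impl φ ψ) → BPrf Ax φ → BPrf Ax ψ
  | mono : ∀ {φ ψ}, BPrf Ax (impl φ ψ) → BPrf Ax (impl (.dia φ) (.dia ψ))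
  | monoBox : ∀ {φ ψ}, BPrf Ax (impl φ ψ) → BPrf Ax (impl (.box φ) (.box ψ))
  | nec : ∀ {φ}, BPrf Ax φ → BPrf Ax (.box φ)
  | usubst : ∀ {φ x ψ}, BPrf Ax φ → BPrf Ax (subst φ x ψ)

/-- the μ_c-logic axiomatised by `Ax` : the least extension of `μ_c K` by the axioms
`Ax` closed under the rules -/
inductive Prf (Ax : Set Formula) : Formula → Prop
  | ax : ∀ {φ}, φ ∈ Ax → Prf Ax φ
  | taut : ∀ {φ}, (∀ v, beval v φ = true) → Prf Ax φ
  | norm : Prf Ax (neg (.dia bot))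
  | addL : ∀ {φ ψ}, Prf Ax (impl (.dia (.or φ ψ)) (.or (.dia φ) (.dia ψ)))
  | addR : ∀ {φ ψ}, Prf Ax (impl (.or (.dia φ) (.dia ψ)) (.dia (.or φ ψ)))
  | dual1 : ∀ {φ}, Prf Ax (impl (.dia φ) (neg (.box (neg φ))))
  | dual2 : ∀ {φ}, Prf Ax (impl (neg (.box (neg φ))) (.dia φ))
  | mp : ∀ {φ ψ}, Prf Ax (impl φ ψ) → Prf Ax φ → Prf Ax ψ
  | mono : ∀ {φ ψ}, Prf Ax (impl φ ψ) → Prf Ax (impl (.dia φ) (.dia ψ))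
  | monoBox : ∀ {φ ψ}, Prf Ax (impl φ ψ) → Prf Ax (impl (.box φ) (.box ψ))
  | nec : ∀ {φ}, Prf Ax φ → Prf Ax (.box φ)
  | usubst : ∀ {φ x ψ}, Prf Ax φ → Prf Ax (subst φ x ψ)
  | prefixAx : ∀ {x φ}, ContIn ({x} : Set ℕ) φ → Prf Ax (impl (subst φ x (.mu x φ)) (.mu x φ))
  | lfp : ∀ {x φ γ}, ContIn ({x} : Set ℕ) φ → Prf Ax (impl (subst φ x γ) γ) → Prf Ax (impl (.mu x φ) γ)
  | postfixAx : ∀ {x φ}, CoconIn ({x} : Set ℕ) φ → Prf Ax (impl (.nu x φ) (subst φ x (.nu x φ)))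
  | gfp : ∀ {x φ γ}, CoconIn ({x} : Set ℕ) φ → Prf Ax (impl γ (subst φ x γ)) → Prf Ax (impl γ (.nu x φ))

/- ########  Consistency and (finitary) canonical models  ######## -/

def conjList : List Formula → Formula
  | [] => top
  | φ :: l => .and φ (conjList l)

/-- `Γ` is inconsistent wrt a provability predicate `P` -/
def Incons (P : Formula → Prop) (Γ : Set Formula) : Prop :=
  ∃ l : List Formula, (∀ φ ∈ l, φ ∈ Γ) ∧ P (impl (conjList l) bot)

def Cons (P : Formula → Prop) (Γ : Set Formula) : Prop := ¬ Incons P Γ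

def MaxCons (P : Formula → Prop) (Γ : Set Formula) : Prop :=
  Cons P Γ ∧ ∀ Γ' : Set Formula, Γ ⊂ Γ' → Incons P Γ'

/-- consistency of a single formula -/
def ConsF (P : Formula → Prop) (φ : Formula) : Prop := Cons P {φ}

/-- `ψ_A` : the conjunction of a finite set of formulas -/
noncomputable def conjF (A : Finset Formula) : Formula := conjList A.toList

/-- `ψ_U` : the disjunction of the conjunctions of the members of `U` -/
noncomputable def disjF (U : Finset (Finset Formula)) : Formula :=
  (U.toList.map conjF).foldr .or bot

/-- `∼`-closed and FL-closed -/
def NegFLClosed (Sg : Finset Formula) : Prop :=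
  FLClosed ↑Sg ∧ ∀ φ ∈ Sg, neg φ ∈ Sg

/-- the states of a model over `Sg` : intersections of maximally consistent sets with `Sg` -/
def States (P : Formula → Prop) (Sg : Finset Formula) : Set (Finset Formula) :=
  {A | ∃ Γ : Set Formula, MaxCons P Γ ∧ ↑A = Γ ∩ ↑Sg}

/-- a model over `Sg` with respect to the logic `P` -/
structure ModelOver (P : Formula → Prop) (Sg : Finset Formula) where
  R : Finset Formula → Finset Formula → Prop
  rmin : ∀ A ∈ States P Sg, ∀ B ∈ States P Sg,
      ConsF P (.and (conjF A) (.dia (conjF B))) → R A B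
  rmax : ∀ A ∈ States P Sg, ∀ B ∈ States P Sg, R A B →
      ∀ φ, Formula.box φ ∈ Sg → Formula.box φ ∈ A → φ ∈ B

/-- the Kripke model induced by a model over `Sg` -/
noncomputable def modelOf (P : Formula → Prop) (Sg : Finset Formula)
    (M : ModelOver P Sg) : KModel :=
  ⟨{A : Finset Formula // A ∈ States P Sg}, fun A B => M.R A.1 B.1,
   fun p => {A | Formula.atom p ∈ A.1}⟩

/-- the canonical frame of the logic `P` -/
def canFrame (P : Formula → Prop) : KFrame :=
  ⟨{Γ : Set Formula // MaxCons P Γ}, fun Γ Δ => ∀ φ, Formula.box φ ∈ Γ.1 → φ ∈ Δ.1⟩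

/-- the canonical model of the logic `P`, with an arbitrary valuation `V` -/
def canModelWith (P : Formula → Prop) (V : ℕ → Set {Γ : Set Formula // MaxCons P Γ}) :
    KModel :=
  ⟨{Γ : Set Formula // MaxCons P Γ}, fun Γ Δ => ∀ φ, Formula.box φ ∈ Γ.1 → φ ∈ Δ.1, V⟩

/-- the canonical model of the logic `P` -/
def canModel (P : Formula → Prop) : KModel :=
  canModelWith P (fun p => {Γ | Formula.atom p ∈ Γ.1})

/- ########  Expansions and name-expansions  ######## -/

/-- iterated substitution `φ[β₁/x₁]⋯[βₙ/xₙ]` -/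
def expandBy : List (ℕ × Formula) → Formula → Formula
  | [], φ => φ
  | (x, β) :: l, φ => expandBy l (subst φ x β)

/-- an enumeration of the bound variables of `ξ`, paired with their fixpoint formulas,
respecting the dependency order -/
structure GoodEnum (ξ : Formula) (l : List (ℕ × Formula)) : Prop where
  nodup : (l.map Prod.fst).Nodup
  mem : ∀ x, x ∈ l.map Prod.fst ↔ x ∈ bv ξ
  bind : ∀ p ∈ l, (∃ δ, p.2 = Formula.mu p.1 δ ∧ Subf p.2 ξ) ∨
                  (∃ δ, p.2 = Formula.nu p.1 δ ∧ Subf p.2 ξ)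
  resp : ∀ i j : Fin l.length, dep ξ (l.get i).1 (l.get j).1 → (i : ℕ) < (j : ℕ)

/-- the body `δ` of a fixpoint formula `ηx.δ` -/
def body : Formula → Formula
  | .mu _ δ => δ
  | .nu _ δ => δ
  | φ => φ

/-- name-expansion: substitute `u x` for each bound variable `x` in the list -/
def nexpBy (u : ℕ → Formula) : List ℕ → Formula → Formula
  | [], φ => φ
  | x :: l, φ => nexpBy u l (subst φ x (u x))

section AltFree

lemma binders_le {φ ψ : Formula} (h : Subf φ ψ) : binders φ ≤ binders ψ := by
  induction h with
  | refl => exact le_rfl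
  | orL _ ih => exact ih.trans (Multiset.le_add_right _ _)
  | orR _ ih => exact ih.trans (Multiset.le_add_left _ _)
  | andL _ ih => exact ih.trans (Multiset.le_add_right _ _)
  | andR _ ih => exact ih.trans (Multiset.le_add_left _ _)
  | dia _ ih => exact ih
  | box _ ih => exact ih
  | mu _ ih => exact ih.trans (Multiset.le_cons_self _ _)
  | nu _ ih => exact ih.trans (Multiset.le_cons_self _ _)

lemma y_mem_binders {β δy φ : Formula} {y : ℕ}
    (hib : β = Formula.mu y δy ∨ β = Formula.nu y δy) (h : Subf β φ) :
    y ∈ binders φ := by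
  have h2 := binders_le h
  have h1 : y ∈ binders β := by
    rcases hib with rfl | rfl <;> simp [binders]
  exact Multiset.mem_of_le h2 h1

lemma fv_subf {φ ψ : Formula} (h : Subf φ ψ) :
    ∀ {y : ℕ}, y ∈ fv φ → y ∈ fv ψ ∨ y ∈ binders ψ := by
  induction h with
  | refl => exact fun h => Or.inl h
  | orL _ ih =>
    intro y hy
    rcases ih hy with h | h <;> simp [fv, binders] <;> tauto
  | orR _ ih =>
    intro y hy
    rcases ih hy with h | h <;> simp [fv, binders] <;> tauto
  | andL _ ih =>
    intro y hy
    rcases ih hy with h | h <;> simp [fv, binders] <;> tauto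
  | andR _ ih =>
    intro y hy
    rcases ih hy with h | h <;> simp [fv, binders] <;> tauto
  | dia _ ih => exact fun hy => ih hy
  | box _ ih => exact fun hy => ih hy
  | mu _ ih =>
    intro y hy
    rcases ih hy with h | h
    · rename_i x ψ _
      by_cases hyx : y = x
      · right; simp [binders, hyx]
      · left; simp [fv, Finset.mem_sdiff]; exact ⟨h, hyx⟩
    · right; simp [binders]; right; exact h
  | nu _ ih =>
    intro y hy
    rcases ih hy with h | h
    · rename_i x ψ _
      by_cases hyx : y = x
      · right; simp [binders, hyx]
      · left; simp [fv, Finset.mem_sdiff]; exact ⟨h, hyx⟩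
    · right; simp [binders]; right; exact h

lemma bv_of_binders : ∀ {φ : Formula} {y : ℕ}, y ∈ binders φ → y ∈ bv φ := by
  intro φ
  induction φ with
  | atom p => simp [binders, bv]
  | natom p => simp [binders, bv]
  | or a b iha ihb =>
    intro y h
    simp [binders] at h
    simp [bv]
    exact h.imp (fun h => iha h) (fun h => ihb h)
  | and a b iha ihb =>
    intro y h
    simp [binders] at h
    simp [bv]
    exact h.imp (fun h => iha h) (fun h => ihb h)
  | dia a ih => exact fun h => ih h
  | box a ih => exact fun h => ih h
  | mu x a ih =>
    intro y h
    simp [binders] at h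
    simp [bv]
    exact h.imp id (fun h => ih h)
  | nu x a ih =>
    intro y h
    simp [binders] at h
    simp [bv]
    exact h.imp id (fun h => ih h)

lemma not_mem_body {ξ δy : Formula} {y : ℕ} (hnd : (binders ξ).Nodup)
    (hb : Subf (Formula.mu y δy) ξ ∨ Subf (Formula.nu y δy) ξ) :
    y ∉ binders δy := by
  intro hm
  have hle : (y ::ₘ binders δy) ≤ binders ξ := by
    rcases hb with h | h <;> exact binders_le h
  have h2 := Multiset.count_le_of_le y hle
  rw [Multiset.count_cons_self] at h2
  have h3 := Multiset.nodup_iff_count_le_one.mp hnd y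
  have h4 : 1 ≤ Multiset.count y (binders δy) := Multiset.one_le_count_iff_mem.mpr hm
  omega

lemma binder_unique {y : ℕ} {δ1 δ2 : Formula} :
    ∀ {ξ β1 β2 : Formula}, (binders ξ).Nodup → Subf β1 ξ → Subf β2 ξ →
      (β1 = Formula.mu y δ1 ∨ β1 = Formula.nu y δ1) →
      (β2 = Formula.mu y δ2 ∨ β2 = Formula.nu y δ2) → β1 = β2 := by
  intro ξ
  induction ξ with
  | atom p =>
    intro β1 β2 _ h1 _ hib1 _
    cases h1; rcases hib1 with h | h <;> simp at h
  | natom p =>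
    intro β1 β2 _ h1 _ hib1 _
    cases h1; rcases hib1 with h | h <;> simp at h
  | or a b iha ihb =>
    intro β1 β2 hnd h1 h2 hib1 hib2
    simp only [binders, Multiset.nodup_add] at hnd
    cases h1 with
    | refl => rcases hib1 with h | h <;> simp at h
    | orL h1' =>
      cases h2 with
      | refl => rcases hib2 with h | h <;> simp at h
      | orL h2' => exact iha hnd.1 h1' h2' hib1 hib2
      | orR h2' =>
        exact absurd (Multiset.disjoint_left.mp hnd.2.2 (y_mem_binders hib1 h1'))
          (fun h => h (y_mem_binders hib2 h2'))
    | orR h1' =>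
      cases h2 with
      | refl => rcases hib2 with h | h <;> simp at h
      | orR h2' => exact ihb hnd.2.1 h1' h2' hib1 hib2
      | orL h2' =>
        exact absurd (Multiset.disjoint_left.mp hnd.2.2 (y_mem_binders hib2 h2'))
          (fun h => h (y_mem_binders hib1 h1'))
  | and a b iha ihb =>
    intro β1 β2 hnd h1 h2 hib1 hib2
    simp only [binders, Multiset.nodup_add] at hnd
    cases h1 with
    | refl => rcases hib1 with h | h <;> simp at h
    | andL h1' =>
      cases h2 with
      | refl => rcases hib2 with h | h <;> simp at h
      | andL h2' => exact iha hnd.1 h1' h2' hib1 hib2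
      | andR h2' =>
        exact absurd (Multiset.disjoint_left.mp hnd.2.2 (y_mem_binders hib1 h1'))
          (fun h => h (y_mem_binders hib2 h2'))
    | andR h1' =>
      cases h2 with
      | refl => rcases hib2 with h | h <;> simp at h
      | andR h2' => exact ihb hnd.2.1 h1' h2' hib1 hib2
      | andL h2' =>
        exact absurd (Multiset.disjoint_left.mp hnd.2.2 (y_mem_binders hib2 h2'))
          (fun h => h (y_mem_binders hib1 h1'))
  | dia a ih =>
    intro β1 β2 hnd h1 h2 hib1 hib2
    cases h1 with
    | refl => rcases hib1 with h | h <;> simp at h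
    | dia h1' =>
      cases h2 with
      | refl => rcases hib2 with h | h <;> simp at h
      | dia h2' => exact ih hnd h1' h2' hib1 hib2
  | box a ih =>
    intro β1 β2 hnd h1 h2 hib1 hib2
    cases h1 with
    | refl => rcases hib1 with h | h <;> simp at h
    | box h1' =>
      cases h2 with
      | refl => rcases hib2 with h | h <;> simp at h
      | box h2' => exact ih hnd h1' h2' hib1 hib2
  | mu w χ ih =>
    intro β1 β2 hnd h1 h2 hib1 hib2
    simp only [binders, Multiset.nodup_cons] at hnd
    cases h1 with
    | refl =>
      cases h2 with
      | refl => rfl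
      | mu h2' =>
        exfalso
        have hw : w = y := by
          rcases hib1 with h | h
          · injection h with h1 h2
          · exact absurd h (by simp)
        exact hnd.1 (hw ▸ y_mem_binders hib2 h2')
    | mu h1' =>
      cases h2 with
      | refl =>
        exfalso
        have hw : w = y := by
          rcases hib2 with h | h
          · injection h with ha hb
          · exact absurd h (by simp)
        exact hnd.1 (hw ▸ y_mem_binders hib1 h1')
      | mu h2' => exact ih hnd.2 h1' h2' hib1 hib2
  | nu w χ ih =>
    intro β1 β2 hnd h1 h2 hib1 hib2
    simp only [binders, Multiset.nodup_cons] at hnd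
    cases h1 with
    | refl =>
      cases h2 with
      | refl => rfl
      | nu h2' =>
        exfalso
        have hw : w = y := by
          rcases hib1 with h | h
          · exact absurd h (by simp)
          · injection h with h1 h2
        exact hnd.1 (hw ▸ y_mem_binders hib2 h2')
    | nu h1' =>
      cases h2 with
      | refl =>
        exfalso
        have hw : w = y := by
          rcases hib2 with h | h
          · exact absurd h (by simp)
          · injection h with ha hb
        exact hnd.1 (hw ▸ y_mem_binders hib1 h1')
      | nu h2' => exact ih hnd.2 h1' h2' hib1 hib2

lemma capture {β δy ψ : Formula} {y : ℕ} :
    ∀ {ξ : Formula}, (binders ξ).Nodup → y ∉ fv ξ → Subf β ξ →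
      (β = Formula.mu y δy ∨ β = Formula.nu y δy) → Subf ψ ξ → y ∈ fv ψ →
      Subf ψ δy := by
  intro ξ
  induction ξ with
  | atom p =>
    intro _ _ hβ hib _ _
    cases hβ; rcases hib with h | h <;> simp at h
  | natom p =>
    intro _ _ hβ hib _ _
    cases hβ; rcases hib with h | h <;> simp at h
  | or a b iha ihb =>
    intro hnd hnfv hβ hib hψ hyfv
    simp only [binders, Multiset.nodup_add] at hnd
    have hna : y ∉ fv a := fun h => hnfv (by simp [fv]; exact Or.inl h)
    have hnb : y ∉ fv b := fun h => hnfv (by simp [fv]; exact Or.inr h)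
    cases hβ with
    | refl => rcases hib with h | h <;> simp at h
    | orL hβ' =>
      cases hψ with
      | refl => exact absurd hyfv hnfv
      | orL hψ' => exact iha hnd.1 hna hβ' hib hψ' hyfv
      | orR hψ' =>
        exfalso
        rcases fv_subf hψ' hyfv with h | h
        · exact hnb h
        · exact Multiset.disjoint_left.mp hnd.2.2 (y_mem_binders hib hβ') h
    | orR hβ' =>
      cases hψ with
      | refl => exact absurd hyfv hnfv
      | orR hψ' => exact ihb hnd.2.1 hnb hβ' hib hψ' hyfv
      | orL hψ' =>
        exfalso
        rcases fv_subf hψ' hyfv with h | h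
        · exact hna h
        · exact Multiset.disjoint_left.mp hnd.2.2 h (y_mem_binders hib hβ')
  | and a b iha ihb =>
    intro hnd hnfv hβ hib hψ hyfv
    simp only [binders, Multiset.nodup_add] at hnd
    have hna : y ∉ fv a := fun h => hnfv (by simp [fv]; exact Or.inl h)
    have hnb : y ∉ fv b := fun h => hnfv (by simp [fv]; exact Or.inr h)
    cases hβ with
    | refl => rcases hib with h | h <;> simp at h
    | andL hβ' =>
      cases hψ with
      | refl => exact absurd hyfv hnfv
      | andL hψ' => exact iha hnd.1 hna hβ' hib hψ' hyfv
      | andR hψ' =>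
        exfalso
        rcases fv_subf hψ' hyfv with h | h
        · exact hnb h
        · exact Multiset.disjoint_left.mp hnd.2.2 (y_mem_binders hib hβ') h
    | andR hβ' =>
      cases hψ with
      | refl => exact absurd hyfv hnfv
      | andR hψ' => exact ihb hnd.2.1 hnb hβ' hib hψ' hyfv
      | andL hψ' =>
        exfalso
        rcases fv_subf hψ' hyfv with h | h
        · exact hna h
        · exact Multiset.disjoint_left.mp hnd.2.2 h (y_mem_binders hib hβ')
  | dia a ih =>
    intro hnd hnfv hβ hib hψ hyfv
    cases hβ with
    | refl => rcases hib with h | h <;> simp at h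
    | dia hβ' =>
      cases hψ with
      | refl => exact absurd hyfv hnfv
      | dia hψ' => exact ih hnd hnfv hβ' hib hψ' hyfv
  | box a ih =>
    intro hnd hnfv hβ hib hψ hyfv
    cases hβ with
    | refl => rcases hib with h | h <;> simp at h
    | box hβ' =>
      cases hψ with
      | refl => exact absurd hyfv hnfv
      | box hψ' => exact ih hnd hnfv hβ' hib hψ' hyfv
  | mu w χ ih =>
    intro hnd hnfv hβ hib hψ hyfv
    simp only [binders, Multiset.nodup_cons] at hnd
    cases hβ with
    | refl =>
      have hw : w = y ∧ χ = δy := by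
        rcases hib with h | h
        · injection h with h1 h2; exact ⟨h1, h2⟩
        · exact absurd h (by simp)
      cases hψ with
      | refl => exact absurd hyfv hnfv
      | mu hψ' => exact hw.2 ▸ hψ'
    | mu hβ' =>
      have hybχ : y ∈ binders χ := y_mem_binders hib hβ'
      have hwy : w ≠ y := by rintro rfl; exact hnd.1 hybχ
      have hnχ : y ∉ fv χ := by
        intro h
        exact hnfv (by simp [fv, Finset.mem_sdiff]; exact ⟨h, fun hh => hwy hh.symm⟩)
      cases hψ with
      | refl => exact absurd hyfv hnfv
      | mu hψ' => exact ih hnd.2 hnχ hβ' hib hψ' hyfv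
  | nu w χ ih =>
    intro hnd hnfv hβ hib hψ hyfv
    simp only [binders, Multiset.nodup_cons] at hnd
    cases hβ with
    | refl =>
      have hw : w = y ∧ χ = δy := by
        rcases hib with h | h
        · exact absurd h (by simp)
        · injection h with h1 h2; exact ⟨h1, h2⟩
      cases hψ with
      | refl => exact absurd hyfv hnfv
      | nu hψ' => exact hw.2 ▸ hψ'
    | nu hβ' =>
      have hybχ : y ∈ binders χ := y_mem_binders hib hβ'
      have hwy : w ≠ y := by rintro rfl; exact hnd.1 hybχ
      have hnχ : y ∉ fv χ := by
        intro h
        exact hnfv (by simp [fv, Finset.mem_sdiff]; exact ⟨h, fun hh => hwy hh.symm⟩)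
      cases hψ with
      | refl => exact absurd hyfv hnfv
      | nu hψ' => exact ih hnd.2 hnχ hβ' hib hψ' hyfv

/-- every fixpoint subformula of a `μ_cML`-formula has a (co)continuous body -/
def GoalK (φ : Formula) : Prop :=
  (∀ y δ, Subf (Formula.mu y δ) φ → ∃ X : Set ℕ, y ∈ X ∧ ContIn X δ) ∧
  (∀ y δ, Subf (Formula.nu y δ) φ → ∃ X : Set ℕ, y ∈ X ∧ CoconIn X δ)

lemma GoalK.or' {a b : Formula} (ha : GoalK a) (hb : GoalK b) : GoalK (Formula.or a b) := by
  constructor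
  · intro y δ hs
    cases hs with
    | orL h => exact ha.1 y δ h
    | orR h => exact hb.1 y δ h
  · intro y δ hs
    cases hs with
    | orL h => exact ha.2 y δ h
    | orR h => exact hb.2 y δ h

lemma GoalK.and' {a b : Formula} (ha : GoalK a) (hb : GoalK b) : GoalK (Formula.and a b) := by
  constructor
  · intro y δ hs
    cases hs with
    | andL h => exact ha.1 y δ h
    | andR h => exact hb.1 y δ h
  · intro y δ hs
    cases hs with
    | andL h => exact ha.2 y δ h
    | andR h => exact hb.2 y δ h

lemma GoalK.dia' {a : Formula} (ha : GoalK a) : GoalK (Formula.dia a) := by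
  constructor
  · intro y δ hs; cases hs with | dia h => exact ha.1 y δ h
  · intro y δ hs; cases hs with | dia h => exact ha.2 y δ h

lemma GoalK.box' {a : Formula} (ha : GoalK a) : GoalK (Formula.box a) := by
  constructor
  · intro y δ hs; cases hs with | box h => exact ha.1 y δ h
  · intro y δ hs; cases hs with | box h => exact ha.2 y δ h

lemma GoalK.mu' {χ : Formula} {w : ℕ} (h : GoalK χ)
    (hc : ∃ X : Set ℕ, w ∈ X ∧ ContIn X χ) : GoalK (Formula.mu w χ) := by
  constructor
  · intro y δ hs
    cases hs with
    | refl => exact hc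
    | mu hs' => exact h.1 y δ hs'
  · intro y δ hs
    cases hs with
    | mu hs' => exact h.2 y δ hs'

lemma GoalK.nu' {χ : Formula} {w : ℕ} (h : GoalK χ)
    (hc : ∃ X : Set ℕ, w ∈ X ∧ CoconIn X χ) : GoalK (Formula.nu w χ) := by
  constructor
  · intro y δ hs
    cases hs with
    | nu hs' => exact h.1 y δ hs'
  · intro y δ hs
    cases hs with
    | refl => exact hc
    | nu hs' => exact h.2 y δ hs'

lemma keyLemma : ∀ φ : Formula,
    (MuC φ → GoalK φ) ∧ (∀ X, ContIn X φ → GoalK φ) ∧ (∀ X, CoconIn X φ → GoalK φ) := by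
  intro φ
  induction φ with
  | atom p =>
    have g : GoalK (Formula.atom p) := ⟨fun y δ hs => (by cases hs), fun y δ hs => (by cases hs)⟩
    exact ⟨fun _ => g, fun _ _ => g, fun _ _ => g⟩
  | natom p =>
    have g : GoalK (Formula.natom p) := ⟨fun y δ hs => (by cases hs), fun y δ hs => (by cases hs)⟩
    exact ⟨fun _ => g, fun _ _ => g, fun _ _ => g⟩
  | or a b iha ihb =>
    have h1 : MuC (Formula.or a b) → GoalK (Formula.or a b) := by
      intro hm
      cases hm with
      | or ha hb => exact GoalK.or' (iha.1 ha) (ihb.1 hb)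
    refine ⟨h1, fun X hc => ?_, fun X hc => ?_⟩
    · cases hc with
      | free hm _ => exact h1 hm
      | or hca hcb => exact GoalK.or' (iha.2.1 _ hca) (ihb.2.1 _ hcb)
    · cases hc with
      | free hm _ => exact h1 hm
      | or hca hcb => exact GoalK.or' (iha.2.2 _ hca) (ihb.2.2 _ hcb)
  | and a b iha ihb =>
    have h1 : MuC (Formula.and a b) → GoalK (Formula.and a b) := by
      intro hm
      cases hm with
      | and ha hb => exact GoalK.and' (iha.1 ha) (ihb.1 hb)
    refine ⟨h1, fun X hc => ?_, fun X hc => ?_⟩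
    · cases hc with
      | free hm _ => exact h1 hm
      | and hca hcb => exact GoalK.and' (iha.2.1 _ hca) (ihb.2.1 _ hcb)
    · cases hc with
      | free hm _ => exact h1 hm
      | and hca hcb => exact GoalK.and' (iha.2.2 _ hca) (ihb.2.2 _ hcb)
  | dia a ih =>
    have h1 : MuC (Formula.dia a) → GoalK (Formula.dia a) := by
      intro hm
      cases hm with
      | dia ha => exact GoalK.dia' (ih.1 ha)
    refine ⟨h1, fun X hc => ?_, fun X hc => ?_⟩
    · cases hc with
      | free hm _ => exact h1 hm
      | dia hca => exact GoalK.dia' (ih.2.1 _ hca)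
    · cases hc with
      | free hm _ => exact h1 hm
  | box a ih =>
    have h1 : MuC (Formula.box a) → GoalK (Formula.box a) := by
      intro hm
      cases hm with
      | box ha => exact GoalK.box' (ih.1 ha)
    refine ⟨h1, fun X hc => ?_, fun X hc => ?_⟩
    · cases hc with
      | free hm _ => exact h1 hm
    · cases hc with
      | free hm _ => exact h1 hm
      | box hca => exact GoalK.box' (ih.2.2 _ hca)
  | mu w χ ih =>
    have h1 : MuC (Formula.mu w χ) → GoalK (Formula.mu w χ) := by
      intro hm
      cases hm with
      | mu hc => exact GoalK.mu' (ih.2.1 _ hc) ⟨{w}, rfl, hc⟩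
    refine ⟨h1, fun X hc => ?_, fun X hc => ?_⟩
    · cases hc with
      | free hm _ => exact h1 hm
      | mu hc' => exact GoalK.mu' (ih.2.1 _ hc') ⟨insert w X, Set.mem_insert w X, hc'⟩
    · cases hc with
      | free hm _ => exact h1 hm
  | nu w χ ih =>
    have h1 : MuC (Formula.nu w χ) → GoalK (Formula.nu w χ) := by
      intro hm
      cases hm with
      | nu hc => exact GoalK.nu' (ih.2.2 _ hc) ⟨{w}, rfl, hc⟩
    refine ⟨h1, fun X hc => ?_, fun X hc => ?_⟩
    · cases hc with
      | free hm _ => exact h1 hm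
    · cases hc with
      | free hm _ => exact h1 hm
      | nu hc' => exact GoalK.nu' (ih.2.2 _ hc') ⟨insert w X, Set.mem_insert w X, hc'⟩
lemma lemE {y z : ℕ} {δ : Formula} (hyfv : y ∈ fv (Formula.nu z δ)) :
    ∀ {φ : Formula} (X : Set ℕ), ContIn X φ → y ∈ X → y ∉ binders φ →
      Subf (Formula.nu z δ) φ → False := by
  intro φ
  induction φ with
  | atom p => intro _ _ _ _ hs; cases hs
  | natom p => intro _ _ _ _ hs; cases hs
  | or a b iha ihb =>
    intro X hc hyX hyb hs
    cases hc with
    | free _ hfv => exact (fv_subf hs hyfv).elim (hfv y hyX) hyb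
    | or hca hcb =>
      simp only [binders, Multiset.mem_add, not_or] at hyb
      cases hs with
      | orL hs' => exact iha X hca hyX hyb.1 hs'
      | orR hs' => exact ihb X hcb hyX hyb.2 hs'
  | and a b iha ihb =>
    intro X hc hyX hyb hs
    cases hc with
    | free _ hfv => exact (fv_subf hs hyfv).elim (hfv y hyX) hyb
    | and hca hcb =>
      simp only [binders, Multiset.mem_add, not_or] at hyb
      cases hs with
      | andL hs' => exact iha X hca hyX hyb.1 hs'
      | andR hs' => exact ihb X hcb hyX hyb.2 hs'
  | dia a ih =>
    intro X hc hyX hyb hs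
    cases hc with
    | free _ hfv => exact (fv_subf hs hyfv).elim (hfv y hyX) hyb
    | dia hca =>
      cases hs with
      | dia hs' => exact ih X hca hyX hyb hs'
  | box a ih =>
    intro X hc hyX hyb hs
    cases hc with
    | free _ hfv => exact (fv_subf hs hyfv).elim (hfv y hyX) hyb
  | mu w χ ih =>
    intro X hc hyX hyb hs
    cases hc with
    | free _ hfv => exact (fv_subf hs hyfv).elim (hfv y hyX) hyb
    | mu hc' =>
      simp only [binders, Multiset.mem_cons, not_or] at hyb
      cases hs with
      | mu hs' => exact ih (insert w X) hc' (Set.mem_insert_of_mem _ hyX) hyb.2 hs'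
  | nu w χ ih =>
    intro X hc hyX hyb hs
    cases hc with
    | free _ hfv => exact (fv_subf hs hyfv).elim (hfv y hyX) hyb

lemma lemE' {y z : ℕ} {δ : Formula} (hyfv : y ∈ fv (Formula.mu z δ)) :
    ∀ {φ : Formula} (X : Set ℕ), CoconIn X φ → y ∈ X → y ∉ binders φ →
      Subf (Formula.mu z δ) φ → False := by
  intro φ
  induction φ with
  | atom p => intro _ _ _ _ hs; cases hs
  | natom p => intro _ _ _ _ hs; cases hs
  | or a b iha ihb =>
    intro X hc hyX hyb hs
    cases hc with
    | free _ hfv => exact (fv_subf hs hyfv).elim (hfv y hyX) hyb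
    | or hca hcb =>
      simp only [binders, Multiset.mem_add, not_or] at hyb
      cases hs with
      | orL hs' => exact iha X hca hyX hyb.1 hs'
      | orR hs' => exact ihb X hcb hyX hyb.2 hs'
  | and a b iha ihb =>
    intro X hc hyX hyb hs
    cases hc with
    | free _ hfv => exact (fv_subf hs hyfv).elim (hfv y hyX) hyb
    | and hca hcb =>
      simp only [binders, Multiset.mem_add, not_or] at hyb
      cases hs with
      | andL hs' => exact iha X hca hyX hyb.1 hs'
      | andR hs' => exact ihb X hcb hyX hyb.2 hs'
  | dia a ih =>
    intro X hc hyX hyb hs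
    cases hc with
    | free _ hfv => exact (fv_subf hs hyfv).elim (hfv y hyX) hyb
  | box a ih =>
    intro X hc hyX hyb hs
    cases hc with
    | free _ hfv => exact (fv_subf hs hyfv).elim (hfv y hyX) hyb
    | box hca =>
      cases hs with
      | box hs' => exact ih X hca hyX hyb hs'
  | mu w χ ih =>
    intro X hc hyX hyb hs
    cases hc with
    | free _ hfv => exact (fv_subf hs hyfv).elim (hfv y hyX) hyb
  | nu w χ ih =>
    intro X hc hyX hyb hs
    cases hc with
    | free _ hfv => exact (fv_subf hs hyfv).elim (hfv y hyX) hyb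
    | nu hc' =>
      simp only [binders, Multiset.mem_cons, not_or] at hyb
      cases hs with
      | nu hs' => exact ih (insert w X) hc' (Set.mem_insert_of_mem _ hyX) hyb.2 hs'
end AltFree
/-- In the continuous modal μ-calculus, if `x <_ξ y` in the dependency
order of a clean formula `ξ`, then `x` is a μ-variable iff `y` is (alternation freeness). -/
theorem muC_alternation_free (ξ : Formula) (hmu : MuC ξ) (hclean : Clean ξ)
    (x y : ℕ) (h : dep ξ x y) : (MuVar ξ x ↔ MuVar ξ y) := by
  obtain ⟨htidy, hnd⟩ := hclean
  have base : ∀ a b : ℕ, depBase ξ a b → (MuVar ξ a ↔ MuVar ξ b) := by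
    intro a b hab
    obtain ⟨δa, δb, hba, hbb, ⟨hsub, _⟩, ⟨hbsub, _⟩⟩ := hab
    have hbin : b ∉ binders δb := not_mem_body hnd hbb
    have hbfva : b ∈ fv δa := by
      have hf := fv_subf hbsub (show b ∈ fv (Formula.atom b) by simp [fv])
      rcases hf with h | h
      · exact h
      · exact absurd (Multiset.mem_of_le (binders_le hsub) h) hbin
    have hbB : b ∈ binders ξ := by
      rcases hbb with h | h
      · exact y_mem_binders (Or.inl rfl) h
      · exact y_mem_binders (Or.inr rfl) h
    have hbnfvξ : b ∉ fv ξ := Finset.disjoint_right.mp htidy (bv_of_binders hbB)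
    rcases hbb with hbbμ | hbbν
    · -- b is a μ-variable
      have hMb : MuVar ξ b := ⟨δb, hbbμ⟩
      have hMa : MuVar ξ a := by
        rcases hba with hμ | hν
        · exact ⟨δa, hμ⟩
        · exfalso
          have hab : a ≠ b := by
            rintro rfl
            have := binder_unique hnd hν hbbμ (Or.inr rfl) (Or.inl rfl)
            simp at this
          have hbfv : b ∈ fv (Formula.nu a δa) := by
            simp only [fv, Finset.mem_sdiff, Finset.mem_singleton]
            exact ⟨hbfva, fun h => hab h.symm⟩
          have hcap : Subf (Formula.nu a δa) δb :=
            capture hnd hbnfvξ hbbμ (Or.inl rfl) hν hbfv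
          obtain ⟨X, hbX, hcont⟩ := ((keyLemma ξ).1 hmu).1 b δb hbbμ
          exact lemE hbfv X hcont hbX hbin hcap
      exact iff_of_true hMa hMb
    · -- b is a ν-variable
      have hNb : ¬ MuVar ξ b := by
        rintro ⟨δ, hδ⟩
        have := binder_unique hnd hδ hbbν (Or.inl rfl) (Or.inr rfl)
        simp at this
      have hNa : ¬ MuVar ξ a := by
        rintro ⟨δ', hδ'⟩
        rcases hba with hμ | hν
        · have hab : a ≠ b := by
            rintro rfl
            have := binder_unique hnd hμ hbbν (Or.inl rfl) (Or.inr rfl)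
            simp at this
          have hbfv : b ∈ fv (Formula.mu a δa) := by
            simp only [fv, Finset.mem_sdiff, Finset.mem_singleton]
            exact ⟨hbfva, fun h => hab h.symm⟩
          have hcap : Subf (Formula.mu a δa) δb :=
            capture hnd hbnfvξ hbbν (Or.inr rfl) hμ hbfv
          obtain ⟨X, hbX, hco⟩ := ((keyLemma ξ).1 hmu).2 b δb hbbν
          exact lemE' hbfv X hco hbX hbin hcap
        · have := binder_unique hnd hδ' hν (Or.inl rfl) (Or.inr rfl)
          simp at this
      exact iff_of_false hNa hNb
  induction h with
  | single hxy => exact base _ _ hxy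
  | tail _ hbc ih => exact ih.trans (base _ _ hbc)
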